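/- Let G be a homogeneous torsion-free transitive abelian group. Then for every nonempty index set I, the direct sum ⨁_{i∈I} G of copies of G is transitive. -/

import Mathlib

/-- `n` divides `x` in the group `G`. -/
def Divides {G : Type*} [AddCommGroup G] (n : ℕ) (x : G) : Prop :=
  ∃ z : G, n • z = x

/-- `χ(x) ≤ χ(y)`: every prime-power dividing `x` divides `y`. -/
def HeightLE {G H : Type*} [AddCommGroup G] [AddCommGroup H] (x : G) (y : H) : Prop :=
  ∀ p k : ℕ, p.Prime → Divides (p ^ k) x → Divides (p ^ k) y

/-- `χ(x) = χ(y)`. -/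
def HeightEq {G H : Type*} [AddCommGroup G] [AddCommGroup H] (x : G) (y : H) : Prop :=
  HeightLE x y ∧ HeightLE y x

def FullyTransitive (G : Type*) [AddCommGroup G] : Prop :=
  ∀ x y : G, HeightLE x y → ∃ φ : G →+ G, φ x = y

def KrylovTransitive (G : Type*) [AddCommGroup G] : Prop :=
  ∀ x y : G, HeightEq x y → ∃ φ : G →+ G, φ x = y

def TransitiveGrp (G : Type*) [AddCommGroup G] : Prop :=
  ∀ x y : G, HeightEq x y → ∃ φ : G ≃+ G, φ x = y

def WeaklyTransitive (G : Type*) [AddCommGroup G] : Prop :=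
  ∀ (x y : G) (φ ψ : G →+ G), φ x = y → ψ y = x → ∃ η : G ≃+ G, η x = y

def IsTorsionFreeGrp (G : Type*) [AddCommGroup G] : Prop :=
  ∀ (n : ℤ) (x : G), n ≠ 0 → n • x = 0 → x = 0

/-- `τ(x) ≤ τ(y)`. -/
def TypeLE {G H : Type*} [AddCommGroup G] [AddCommGroup H] (x : G) (y : H) : Prop :=
  ∃ n : ℤ, n ≠ 0 ∧ HeightLE x (n • y)

/-- `τ(x) = τ(y)`. -/
def TypeEq {G H : Type*} [AddCommGroup G] [AddCommGroup H] (x : G) (y : H) : Prop :=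
  TypeLE x y ∧ TypeLE y x

def Homogeneous (G : Type*) [AddCommGroup G] : Prop :=
  ∀ x y : G, x ≠ 0 → y ≠ 0 → TypeEq x y

/-- `π(G)`: primes `p` with `pG ≠ G`. -/
def piSet (G : Type*) [AddCommGroup G] : Set ℕ :=
  {p | p.Prime ∧ ¬ ∀ x : G, ∃ z : G, p • z = x}

namespace Krylov

variable {G : Type*} [AddCommGroup G]

lemma div_one (x : G) : Divides 1 x := ⟨x, one_smul _ _⟩

lemma div_mono {s r : ℕ} {x : G} (h : Divides (s * r) x) : Divides r x := by
  obtain ⟨z, hz⟩ := h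
  exact ⟨s • z, by rw [← hz, ← mul_smul, mul_comm]⟩

lemma div_pow_mono {p k j : ℕ} {x : G} (hkj : k ≤ j) (h : Divides (p ^ j) x) :
    Divides (p ^ k) x := by
  have : p ^ j = p ^ (j - k) * p ^ k := by rw [← pow_add]; congr 1; omega
  exact div_mono (this ▸ h)

lemma div_smul {r t : ℕ} {x : G} (h : Divides r x) : Divides r (t • x) := by
  obtain ⟨z, hz⟩ := h
  exact ⟨t • z, by rw [← hz, smul_comm]⟩

lemma div_smul_mul {r : ℕ} (t : ℕ) {x : G} (h : Divides r x) : Divides (t * r) (t • x) := by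
  obtain ⟨z, hz⟩ := h
  exact ⟨z, by rw [← hz, mul_smul]⟩

lemma div_cancel (hTF : IsTorsionFreeGrp G) {s r : ℕ} {x : G} (hs : s ≠ 0)
    (h : Divides (s * r) (s • x)) : Divides r x := by
  obtain ⟨z, hz⟩ := h
  refine ⟨z, ?_⟩
  have h0 : (s : ℤ) • (r • z - x) = 0 := by
    rw [smul_sub, sub_eq_zero]
    rw [mul_smul] at hz
    rw [natCast_zsmul, natCast_zsmul]
    exact hz
  exact sub_eq_zero.mp (hTF s _ (by exact_mod_cast hs) h0)

lemma div_zsmul_witness {r : ℕ} {x : G} (z : G) (h : (r : ℤ) • z = x) : Divides r x :=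
  ⟨z, by rw [← natCast_zsmul]; exact h⟩

lemma div_coprime {s r : ℕ} {x : G} (hco : Nat.Coprime s r)
    (h : Divides r (s • x)) : Divides r x := by
  obtain ⟨z, hz⟩ := h
  have hb : (Nat.gcd s r : ℤ) = s * Nat.gcdA s r + r * Nat.gcdB s r := Nat.gcd_eq_gcd_ab s r
  rw [hco] at hb
  refine div_zsmul_witness (Nat.gcdA s r • z + Nat.gcdB s r • x) ?_
  have h1 : (r : ℤ) • (Nat.gcdA s r • z) = Nat.gcdA s r • ((s : ℤ) • x) := by
    rw [smul_comm]
    congr 1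
    rw [natCast_zsmul, natCast_zsmul, hz]
  calc (r : ℤ) • (Nat.gcdA s r • z + Nat.gcdB s r • x)
      = Nat.gcdA s r • ((s:ℤ) • x) + Nat.gcdB s r • ((r:ℤ) • x) := by
        rw [smul_add, h1]; congr 1; rw [smul_comm]
    _ = ((s:ℤ) * Nat.gcdA s r + (r:ℤ) * Nat.gcdB s r) • x := by
        rw [add_smul, smul_smul, smul_smul, mul_comm (Nat.gcdA s r), mul_comm (Nat.gcdB s r)]
    _ = x := by rw [← hb]; norm_num

lemma div_mul_coprime {s r : ℕ} {x : G} (hco : Nat.Coprime s r)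
    (hs : Divides s x) (hr : Divides r x) : Divides (s * r) x := by
  obtain ⟨z1, hz1⟩ := hs
  obtain ⟨z2, hz2⟩ := hr
  have hb : (1 : ℤ) = s * Nat.gcdA s r + r * Nat.gcdB s r := by
    rw [← Nat.gcd_eq_gcd_ab s r, hco]; norm_num
  refine div_zsmul_witness (Nat.gcdA s r • z2 + Nat.gcdB s r • z1) ?_
  push_cast
  calc ((s:ℤ) * r) • (Nat.gcdA s r • z2 + Nat.gcdB s r • z1)
      = ((s:ℤ) * Nat.gcdA s r) • ((r:ℤ) • z2) + ((r:ℤ) * Nat.gcdB s r) • ((s:ℤ) • z1) := by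
        rw [smul_add, smul_smul, smul_smul, smul_smul, smul_smul]; ring_nf
    _ = ((s:ℤ) * Nat.gcdA s r) • x + ((r:ℤ) * Nat.gcdB s r) • x := by
        rw [natCast_zsmul, natCast_zsmul, hz1, hz2]
    _ = x := by rw [← add_smul, ← hb, one_smul]

lemma key1 (hTF : IsTorsionFreeGrp G) {p t v j : ℕ} {x : G} (hp : p.Prime) (hpt : ¬ p ∣ t)
    (h : Divides (p ^ (v + j)) ((p ^ v * t) • x)) : Divides (p ^ j) x := by
  rw [mul_smul] at h
  rw [pow_add] at h
  have h1 : Divides (p ^ j) (t • x) := div_cancel hTF (pow_ne_zero v hp.ne_zero) h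
  exact div_coprime (((Nat.Prime.coprime_iff_not_dvd hp).mpr hpt).symm.pow_right j) h1

end Krylov


namespace Krylov

variable {G : Type*} [AddCommGroup G]

/-- Good exponent function: `δ p` is the excess of the `p`-height of `a` over that of `c`. -/
def GoodExp (a c : G) (n : ℕ) (δ : ℕ → ℕ) : Prop :=
  ∀ p : ℕ, p.Prime →
    (δ p ≤ n.factorization p) ∧
    (Divides (p ^ δ p) a) ∧
    (∀ j, Divides (p ^ (j + δ p)) a → Divides (p ^ j) c) ∧
    (1 ≤ δ p → ∀ j, Divides (p ^ j) c → Divides (p ^ (j + δ p)) a) ∧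
    (1 ≤ δ p → ∃ j0, Divides (p ^ j0) a ∧ ¬ Divides (p ^ j0) c)

lemma exists_goodExp (hTF : IsTorsionFreeGrp G) {a c : G} {n : ℕ} (hn0 : n ≠ 0)
    (hn : HeightLE a (n • c)) : ∃ δ : ℕ → ℕ, GoodExp a c n δ := by
  classical
  -- the "ok" predicate
  set P : ℕ → ℕ → Prop := fun p δ =>
    δ ≤ n.factorization p ∧ Divides (p ^ δ) a ∧
      ∀ j, Divides (p ^ (j + δ)) a → Divides (p ^ j) c with hP
  have hEx : ∀ p : ℕ, p.Prime → ∃ δ, P p δ := by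
    intro p hp
    set v := n.factorization p with hv
    have hdec : p ^ v * (n / p ^ v) = n := Nat.ordProj_mul_ordCompl_eq_self n p
    have hndvd : ¬ p ∣ (n / p ^ v) := Nat.not_dvd_ordCompl hp hn0
    by_cases hva : Divides (p ^ v) a
    · refine ⟨v, le_rfl, hva, fun j hj => ?_⟩
      have h1 : Divides (p ^ (j + v)) (n • c) := hn p (j + v) hp hj
      rw [← hdec] at h1
      rw [add_comm] at h1
      exact key1 hTF hp hndvd h1
    · -- heights of a at p are bounded by v
      set hA := Nat.findGreatest (fun t => Divides (p ^ t) a) v with hhA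
      have hAle : hA ≤ v := Nat.findGreatest_le v
      have hAdiv : Divides (p ^ hA) a :=
        Nat.findGreatest_spec (P := fun t => Divides (p ^ t) a) (Nat.zero_le _) (by simpa using div_one a)
      have hAmax : ∀ t, Divides (p ^ t) a → t ≤ hA := by
        intro t ht
        by_cases htv : t ≤ v
        · exact Nat.le_findGreatest htv ht
        · exact absurd (div_pow_mono (by omega) ht) hva
      set hC := Nat.findGreatest (fun t => Divides (p ^ t) c) hA with hhC
      have hCle : hC ≤ hA := Nat.findGreatest_le hA
      have hCdiv : Divides (p ^ hC) c :=
        Nat.findGreatest_spec (P := fun t => Divides (p ^ t) c) (Nat.zero_le _) (by simpa using div_one c)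
      refine ⟨hA - hC, by omega, div_pow_mono (by omega) hAdiv, fun j hj => ?_⟩
      have := hAmax _ hj
      exact div_pow_mono (by omega) hCdiv
  -- define δ by least choice
  refine ⟨fun p => if hp : p.Prime then Nat.find (hEx p hp) else 0, ?_⟩
  intro p hp
  simp only [dif_pos hp]
  obtain ⟨h1, h2, h3⟩ := Nat.find_spec (hEx p hp)
  refine ⟨h1, h2, h3, ?_, ?_⟩
  · -- (iii) from minimality
    intro hδ1 j0 hj0
    by_contra hcon
    set δ := Nat.find (hEx p hp) with hδ
    set hA := Nat.findGreatest (fun t => Divides (p ^ t) a) (j0 + δ) with hhA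
    have hAdiv : Divides (p ^ hA) a :=
      Nat.findGreatest_spec (P := fun t => Divides (p ^ t) a) (Nat.zero_le _) (by simpa using div_one a)
    have hδA : δ ≤ hA := Nat.le_findGreatest (by omega) h2
    have hAmax : ∀ t, Divides (p ^ t) a → t ≤ hA := by
      intro t ht
      by_cases htv : t ≤ j0 + δ
      · exact Nat.le_findGreatest htv ht
      · exact absurd (div_pow_mono (by omega : j0 + δ ≤ t) ht) hcon
    have hAlt : hA < j0 + δ := by
      rcases lt_or_eq_of_le (Nat.findGreatest_le (j0 + δ) : hA ≤ j0 + δ) with h | h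
      · exact h
      · exact absurd (h ▸ hAdiv) hcon
    have hP' : P p (hA - j0) := by
      refine ⟨by omega, div_pow_mono (by omega) hAdiv, fun j hj => ?_⟩
      have := hAmax _ hj
      exact div_pow_mono (by omega) hj0
    exact Nat.find_min (hEx p hp) (by omega) hP'
  · -- (iv): witness from non-okness of 0
    intro hδ1
    have h0 : ¬ P p 0 := Nat.find_min (hEx p hp) (by omega)
    rw [hP] at h0
    have h4 : ¬ ∀ j, Divides (p ^ (j + 0)) a → Divides (p ^ j) c :=
      fun hh => h0 ⟨Nat.zero_le _, by rw [pow_zero]; exact div_one a, hh⟩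
    push_neg at h4
    obtain ⟨j0, hj1, hj2⟩ := h4
    exact ⟨j0, by simpa using hj1, hj2⟩

lemma prod_decomp {n p : ℕ} (hn0 : n ≠ 0) (hp : p.Prime) (δ : ℕ → ℕ)
    (hδ : δ p ≤ n.factorization p) :
    ∃ t : ℕ, (∏ q ∈ n.primeFactors, q ^ δ q) = p ^ (δ p) * t ∧ ¬ p ∣ t := by
  classical
  have hnotdvd : ∀ (s : Finset ℕ), (∀ q ∈ s, q.Prime) → p ∉ s → ¬ p ∣ ∏ q ∈ s, q ^ δ q := by
    intro s hs hps hdvd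
    obtain ⟨q, hq, hpq⟩ := hp.prime.exists_mem_finset_dvd hdvd
    have : p = q := (Nat.prime_dvd_prime_iff_eq hp (hs q hq)).mp (hp.dvd_of_dvd_pow hpq)
    exact hps (this ▸ hq)
  by_cases hmem : p ∈ n.primeFactors
  · refine ⟨∏ q ∈ n.primeFactors.erase p, q ^ δ q, ?_, ?_⟩
    · rw [← Finset.mul_prod_erase _ _ hmem]
    · exact hnotdvd _ (fun q hq => Nat.prime_of_mem_primeFactors (Finset.mem_of_mem_erase hq))
        (Finset.notMem_erase p _)
  · have hz : δ p = 0 := by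
      have : n.factorization p = 0 := by
        by_cases h : p ∣ n
        · exact absurd (Nat.mem_primeFactors.mpr ⟨hp, h, hn0⟩) hmem
        · exact Nat.factorization_eq_zero_of_not_dvd h
      omega
    exact ⟨_, by rw [hz, pow_zero, one_mul], hnotdvd _ (fun q hq => Nat.prime_of_mem_primeFactors hq) hmem⟩

lemma core (hTF : IsTorsionFreeGrp G) {a c u w : G} {n m : ℕ} (hn0 : n ≠ 0) (hm0 : m ≠ 0)
    {δ ε : ℕ → ℕ} (hδ : GoodExp a c n δ) (hε : GoodExp c a m ε)
    (hu : (∏ p ∈ n.primeFactors, p ^ δ p) • u = a)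
    (hw : (∏ p ∈ m.primeFactors, p ^ ε p) • w = c) : HeightLE u w := by
  intro p k hp hdiv
  obtain ⟨hδ1, hδ2, hδ3, hδ4, hδ5⟩ := hδ p hp
  obtain ⟨hε1, hε2, hε3, hε4, hε5⟩ := hε p hp
  obtain ⟨D1, hD1, hpD1⟩ := prod_decomp hn0 hp δ hδ1
  obtain ⟨E1, hE1, hpE1⟩ := prod_decomp hm0 hp ε hε1
  -- Step 1 : p^(δ p + k) ∣ a
  have step1 : Divides (p ^ (δ p + k)) a := by
    have h1 : Divides (p ^ k) (D1 • u) := div_smul hdiv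
    have h2 : Divides (p ^ (δ p) * p ^ k) ((p ^ δ p) • (D1 • u)) := div_smul_mul _ h1
    rw [← pow_add, ← mul_smul, ← hD1, hu] at h2
    exact h2
  -- Step 2 : p^(ε p + k) ∣ c
  have step2 : Divides (p ^ (ε p + k)) c := by
    by_cases hez : ε p = 0
    · rw [hez, zero_add]
      exact hδ3 k (by rwa [add_comm] at step1)
    · -- complementarity: δ p = 0
      have hδz : δ p = 0 := by
        by_contra hdz
        obtain ⟨j0, hj0a, hj0c⟩ := hδ5 (by omega)
        obtain ⟨k0, hk0c, hk0a⟩ := hε5 (by omega)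
        have h1 : ¬ j0 ≤ k0 := fun h => hj0c (div_pow_mono h hk0c)
        have h2 : ¬ k0 ≤ j0 := fun h => hk0a (div_pow_mono h hj0a)
        omega
      have hka : Divides (p ^ k) a := by rwa [hδz, zero_add] at step1
      have := hε4 (by omega) k hka
      rwa [add_comm] at this
  -- Step 3 : conclude
  rw [← hw, hE1, mul_smul] at step2
  rw [pow_add] at step2
  have h3 : Divides (p ^ k) (E1 • w) := div_cancel hTF (pow_ne_zero _ hp.ne_zero) step2
  exact div_coprime (((Nat.Prime.coprime_iff_not_dvd hp).mpr hpE1).symm.pow_right k) h3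

lemma div_prod {x : G} (s : Finset ℕ) (hs : ∀ q ∈ s, q.Prime) (δ : ℕ → ℕ)
    (h : ∀ q ∈ s, Divides (q ^ δ q) x) : Divides (∏ q ∈ s, q ^ δ q) x := by
  classical
  induction s using Finset.induction_on with
  | empty => simpa using div_one x
  | @insert p s hps ih =>
    rw [Finset.prod_insert hps]
    have hco : Nat.Coprime (p ^ δ p) (∏ q ∈ s, q ^ δ q) := by
      apply Nat.Coprime.pow_left
      apply Nat.Coprime.prod_right
      intro q hq
      exact Nat.Coprime.pow_right _ ((Nat.coprime_primes (hs p (Finset.mem_insert_self p s))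
        (hs q (Finset.mem_insert_of_mem hq))).mpr (fun he => hps (he ▸ hq)))
    exact div_mul_coprime hco (h p (Finset.mem_insert_self p s))
      (ih (fun q hq => hs q (Finset.mem_insert_of_mem hq))
        (fun q hq => h q (Finset.mem_insert_of_mem hq)))

lemma dvd_prod_primepow {p : ℕ} (hp : p.Prime) (s : Finset ℕ) (hs : ∀ q ∈ s, q.Prime)
    (δ : ℕ → ℕ) (h : p ∣ ∏ q ∈ s, q ^ δ q) : ∃ q ∈ s, p = q ∧ 1 ≤ δ q := by
  obtain ⟨q, hq, hpq⟩ := hp.prime.exists_mem_finset_dvd h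
  have hpq' : p = q := (Nat.prime_dvd_prime_iff_eq hp (hs q hq)).mp (hp.dvd_of_dvd_pow hpq)
  refine ⟨q, hq, hpq', ?_⟩
  by_contra hc
  have : δ q = 0 := by omega
  rw [this, pow_zero] at hpq
  exact hp.one_lt.ne' (Nat.dvd_one.mp hpq)

lemma natAbs_heightLE {H : Type*} [AddCommGroup H] {a : G} {c : H} {n : ℤ} (hn : n ≠ 0)
    (h : HeightLE a (n • c)) : HeightLE a ((n.natAbs : ℕ) • c) := by
  intro p k hp hd
  have := h p k hp hd
  obtain ⟨z, hz⟩ := this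
  rcases Int.natAbs_eq n with he | he
  · rw [he, natCast_zsmul] at hz
    exact ⟨z, hz⟩
  · rw [he, neg_smul, natCast_zsmul] at hz
    exact ⟨-z, by rw [smul_neg, hz, neg_neg]⟩

end Krylov






namespace Krylov

variable {G : Type*} [AddCommGroup G]

/-- The key pair reduction: given `a c : G` with `c ≠ 0`, there is an automorphism `α` of `G`
and an integer matrix (with explicit inverse) such that `t • a + v • (α c) = 0`. -/
lemma pair (hTF : IsTorsionFreeGrp G) (hhom : Homogeneous G) (ht : TransitiveGrp G)
    (a c : G) (hc : c ≠ 0) :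
    ∃ (α : G ≃+ G) (r s t v r' s' t' v' : ℤ),
      (r' * r + s' * t = 1) ∧ (r' * s + s' * v = 0) ∧ (t' * r + v' * t = 0) ∧
      (t' * s + v' * v = 1) ∧ (r * r' + s * t' = 1) ∧ (r * s' + s * v' = 0) ∧
      (t * r' + v * t' = 0) ∧ (t * s' + v * v' = 1) ∧
      (t • a + v • (α c) = 0) := by
  by_cases ha : a = 0
  · refine ⟨AddEquiv.refl G, 0, 1, 1, 0, 0, 1, 1, 0, by norm_num, by norm_num, by norm_num,
      by norm_num, by norm_num, by norm_num, by norm_num, by norm_num, ?_⟩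
    simp [ha]
  · obtain ⟨⟨n', hn'0, hn'⟩, ⟨m', hm'0, hm'⟩⟩ := hhom a c ha hc
    set n := n'.natAbs with hn
    set m := m'.natAbs with hm
    have hn0 : n ≠ 0 := Int.natAbs_ne_zero.mpr hn'0
    have hm0 : m ≠ 0 := Int.natAbs_ne_zero.mpr hm'0
    have hnle : HeightLE a (n • c) := natAbs_heightLE hn'0 hn'
    have hmle : HeightLE c (m • a) := natAbs_heightLE hm'0 hm'
    obtain ⟨δ, hδ⟩ := exists_goodExp hTF hn0 hnle
    obtain ⟨ε, hε⟩ := exists_goodExp hTF hm0 hmle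
    set D := ∏ p ∈ n.primeFactors, p ^ δ p with hD
    set E := ∏ p ∈ m.primeFactors, p ^ ε p with hE
    have hDa : Divides D a :=
      div_prod _ (fun q hq => Nat.prime_of_mem_primeFactors hq) δ
        (fun q hq => (hδ q (Nat.prime_of_mem_primeFactors hq)).2.1)
    have hEc : Divides E c :=
      div_prod _ (fun q hq => Nat.prime_of_mem_primeFactors hq) ε
        (fun q hq => (hε q (Nat.prime_of_mem_primeFactors hq)).2.1)
    obtain ⟨u, hu⟩ := hDa
    obtain ⟨w, hw⟩ := hEc
    -- coprimality of D and E
    have hco : Nat.Coprime D E := by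
      rw [Nat.coprime_iff_gcd_eq_one]
      by_contra hg
      obtain ⟨p, hp, hpD, hpE⟩ := Nat.Prime.not_coprime_iff_dvd.mp hg
      obtain ⟨q1, _, hq1, hδq⟩ := dvd_prod_primepow hp _
        (fun q hq => Nat.prime_of_mem_primeFactors hq) δ hpD
      obtain ⟨q2, _, hq2, hεq⟩ := dvd_prod_primepow hp _
        (fun q hq => Nat.prime_of_mem_primeFactors hq) ε hpE
      obtain ⟨_, _, _, _, hδ5⟩ := hδ p hp
      obtain ⟨_, _, _, _, hε5⟩ := hε p hp
      obtain ⟨j0, hj0a, hj0c⟩ := hδ5 (by rw [hq1]; exact hδq)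
      obtain ⟨k0, hk0c, hk0a⟩ := hε5 (by rw [hq2]; exact hεq)
      have h1 : ¬ j0 ≤ k0 := fun h => hj0c (div_pow_mono h hk0c)
      have h2 : ¬ k0 ≤ j0 := fun h => hk0a (div_pow_mono h hj0a)
      omega
    -- the two "cores": u and w have equal characteristic
    have huw : HeightEq w u :=
      ⟨core hTF hm0 hn0 hε hδ hw hu, core hTF hn0 hm0 hδ hε hu hw⟩
    obtain ⟨α, hα⟩ := ht w u huw
    -- Bezout
    have hb : (1 : ℤ) = D * Nat.gcdA D E + E * Nat.gcdB D E := by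
      rw [← Nat.gcd_eq_gcd_ab D E, hco]; norm_num
    set r : ℤ := Nat.gcdA D E
    set s : ℤ := Nat.gcdB D E
    refine ⟨α, r, s, -(E:ℤ), (D:ℤ), (D:ℤ), -s, (E:ℤ), r,
      by linarith, by ring, by ring, by linarith, by linarith, by ring, by ring, by linarith, ?_⟩
    have hαc : α c = E • u := by
      rw [← hw, map_nsmul, hα]
    rw [hαc, ← hu]
    have hcast : ∀ (k : ℕ) (x : G), k • x = (k : ℤ) • x := fun k x => (natCast_zsmul x k).symm
    rw [hcast D u, hcast E u, smul_smul, smul_smul, ← add_smul]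
    convert zero_smul ℤ u using 2
    ring

section FinsuppOps

variable {I : Type*} {G : Type*} [AddCommGroup G]

/-- Apply an automorphism of `G` at a single coordinate. -/
noncomputable def opSingle (i : I) (α : G ≃+ G) : (I →₀ G) ≃+ (I →₀ G) where
  toFun x := x + Finsupp.single i (α (x i) - x i)
  invFun x := x + Finsupp.single i (α.symm (x i) - x i)
  left_inv := by
    intro x
    show (x + Finsupp.single i (α (x i) - x i)) +
      Finsupp.single i (α.symm ((x + Finsupp.single i (α (x i) - x i)) i)
        - (x + Finsupp.single i (α (x i) - x i)) i) = x
    have hval : (x + Finsupp.single i (α (x i) - x i)) i = α (x i) := by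
      rw [Finsupp.add_apply, Finsupp.single_eq_same]; abel
    rw [hval]
    rw [α.symm_apply_apply]
    have : Finsupp.single i (x i - α (x i)) = - Finsupp.single i (α (x i) - x i) := by
      rw [← Finsupp.single_neg, neg_sub]
    rw [this]
    abel
  right_inv := by
    intro x
    show (x + Finsupp.single i (α.symm (x i) - x i)) +
      Finsupp.single i (α ((x + Finsupp.single i (α.symm (x i) - x i)) i)
        - (x + Finsupp.single i (α.symm (x i) - x i)) i) = x
    have hval : (x + Finsupp.single i (α.symm (x i) - x i)) i = α.symm (x i) := by
      rw [Finsupp.add_apply, Finsupp.single_eq_same]; abel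
    rw [hval]
    rw [α.apply_symm_apply]
    have : Finsupp.single i (x i - α.symm (x i)) = - Finsupp.single i (α.symm (x i) - x i) := by
      rw [← Finsupp.single_neg, neg_sub]
    rw [this]
    abel
  map_add' := by
    intro x y
    simp only [Finsupp.add_apply, map_add]
    rw [show α (x i) + α (y i) - (x i + y i) = (α (x i) - x i) + (α (y i) - y i) by abel]
    rw [Finsupp.single_add]
    abel

lemma opSingle_apply_same (i : I) (α : G ≃+ G) (x : I →₀ G) :
    (opSingle i α x) i = α (x i) := by
  show (x + Finsupp.single i (α (x i) - x i)) i = α (x i)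
  rw [Finsupp.add_apply, Finsupp.single_eq_same]; abel

lemma opSingle_apply_ne {i k : I} (hk : k ≠ i) (α : G ≃+ G) (x : I →₀ G) :
    (opSingle i α x) k = x k := by
  show (x + Finsupp.single i (α (x i) - x i)) k = x k
  rw [Finsupp.add_apply, Finsupp.single_eq_of_ne' (Ne.symm hk), add_zero]

private lemma pair_helper {G : Type*} [AddCommGroup G] {r' s' r s t v c1 c2 : ℤ}
    (h1 : r' * r + s' * t = c1) (h2 : r' * s + s' * v = c2) (xi xj : G) :
    r' • (r • xi + s • xj) + s' • (t • xi + v • xj) = c1 • xi + c2 • xj := by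
  rw [smul_add, smul_add, smul_smul, smul_smul, smul_smul, smul_smul]
  rw [← h1, ← h2, add_smul, add_smul]
  abel

private lemma pair_helper1 {G : Type*} [AddCommGroup G] {r' s' r s t v : ℤ}
    (h1 : r' * r + s' * t = 1) (h2 : r' * s + s' * v = 0) (xi xj : G) :
    r' • (r • xi + s • xj) + s' • (t • xi + v • xj) = xi := by
  rw [pair_helper h1 h2, one_smul, zero_smul, add_zero]

private lemma pair_helper2 {G : Type*} [AddCommGroup G] {r' s' r s t v : ℤ}
    (h1 : r' * r + s' * t = 0) (h2 : r' * s + s' * v = 1) (xi xj : G) :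
    r' • (r • xi + s • xj) + s' • (t • xi + v • xj) = xj := by
  rw [pair_helper h1 h2, one_smul, zero_smul, zero_add]

/-- Apply an invertible integer 2×2 matrix on two coordinates. -/
noncomputable def opPair (i j : I) (hij : i ≠ j) (r s t v r' s' t' v' : ℤ)
    (h1 : r' * r + s' * t = 1) (h2 : r' * s + s' * v = 0) (h3 : t' * r + v' * t = 0)
    (h4 : t' * s + v' * v = 1) (h5 : r * r' + s * t' = 1) (h6 : r * s' + s * v' = 0)
    (h7 : t * r' + v * t' = 0) (h8 : t * s' + v * v' = 1) :
    (I →₀ G) ≃+ (I →₀ G) where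
  toFun x := x + Finsupp.single i (r • x i + s • x j - x i)
    + Finsupp.single j (t • x i + v • x j - x j)
  invFun x := x + Finsupp.single i (r' • x i + s' • x j - x i)
    + Finsupp.single j (t' • x i + v' • x j - x j)
  left_inv := by
    intro x
    set y := x + Finsupp.single i (r • x i + s • x j - x i)
      + Finsupp.single j (t • x i + v • x j - x j) with hy
    show y + Finsupp.single i (r' • y i + s' • y j - y i)
      + Finsupp.single j (t' • y i + v' • y j - y j) = x
    have hyi : y i = r • x i + s • x j := by
      rw [hy, Finsupp.add_apply, Finsupp.add_apply, Finsupp.single_eq_same,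
        Finsupp.single_eq_of_ne' (Ne.symm hij)]
      abel
    have hyj : y j = t • x i + v • x j := by
      rw [hy, Finsupp.add_apply, Finsupp.add_apply, Finsupp.single_eq_same,
        Finsupp.single_eq_of_ne' hij]
      abel
    have e1 : r' • y i + s' • y j = x i := by rw [hyi, hyj]; exact pair_helper1 h1 h2 _ _
    have e2 : t' • y i + v' • y j = x j := by rw [hyi, hyj]; exact pair_helper2 h3 h4 _ _
    rw [e1, e2, hy]
    have n1 : Finsupp.single i (x i - (r • x i + s • x j - x i) - x i)
        = - Finsupp.single i (r • x i + s • x j - x i) := by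
      rw [← Finsupp.single_neg]; congr 1; abel
    -- assemble
    have : ∀ A B : G, x + Finsupp.single i A + Finsupp.single j B
        + Finsupp.single i (x i - ((x + Finsupp.single i A + Finsupp.single j B) i))
        + Finsupp.single j (x j - ((x + Finsupp.single i A + Finsupp.single j B) j)) = x := by
      intro A B
      have hi : (x + Finsupp.single i A + Finsupp.single j B) i = x i + A := by
        rw [Finsupp.add_apply, Finsupp.add_apply, Finsupp.single_eq_same,
          Finsupp.single_eq_of_ne' (Ne.symm hij)]
        abel
      have hj : (x + Finsupp.single i A + Finsupp.single j B) j = x j + B := by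
        rw [Finsupp.add_apply, Finsupp.add_apply, Finsupp.single_eq_same,
          Finsupp.single_eq_of_ne' hij]
        abel
      rw [hi, hj]
      rw [show x i - (x i + A) = -A by abel, show x j - (x j + B) = -B by abel,
        Finsupp.single_neg, Finsupp.single_neg]
      abel
    have goal := this (r • x i + s • x j - x i) (t • x i + v • x j - x j)
    convert goal using 3 <;> rw [hyi, hyj] <;> abel
  right_inv := by
    intro x
    set y := x + Finsupp.single i (r' • x i + s' • x j - x i)
      + Finsupp.single j (t' • x i + v' • x j - x j) with hy
    show y + Finsupp.single i (r • y i + s • y j - y i)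
      + Finsupp.single j (t • y i + v • y j - y j) = x
    have hyi : y i = r' • x i + s' • x j := by
      rw [hy, Finsupp.add_apply, Finsupp.add_apply, Finsupp.single_eq_same,
        Finsupp.single_eq_of_ne' (Ne.symm hij)]
      abel
    have hyj : y j = t' • x i + v' • x j := by
      rw [hy, Finsupp.add_apply, Finsupp.add_apply, Finsupp.single_eq_same,
        Finsupp.single_eq_of_ne' hij]
      abel
    have e1 : r • y i + s • y j = x i := by rw [hyi, hyj]; exact pair_helper1 h5 h6 _ _
    have e2 : t • y i + v • y j = x j := by rw [hyi, hyj]; exact pair_helper2 h7 h8 _ _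
    rw [e1, e2, hy]
    have : ∀ A B : G, x + Finsupp.single i A + Finsupp.single j B
        + Finsupp.single i (x i - ((x + Finsupp.single i A + Finsupp.single j B) i))
        + Finsupp.single j (x j - ((x + Finsupp.single i A + Finsupp.single j B) j)) = x := by
      intro A B
      have hi : (x + Finsupp.single i A + Finsupp.single j B) i = x i + A := by
        rw [Finsupp.add_apply, Finsupp.add_apply, Finsupp.single_eq_same,
          Finsupp.single_eq_of_ne' (Ne.symm hij)]
        abel
      have hj : (x + Finsupp.single i A + Finsupp.single j B) j = x j + B := by
        rw [Finsupp.add_apply, Finsupp.add_apply, Finsupp.single_eq_same,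
          Finsupp.single_eq_of_ne' hij]
        abel
      rw [hi, hj]
      rw [show x i - (x i + A) = -A by abel, show x j - (x j + B) = -B by abel,
        Finsupp.single_neg, Finsupp.single_neg]
      abel
    have goal := this (r' • x i + s' • x j - x i) (t' • x i + v' • x j - x j)
    convert goal using 3 <;> rw [hyi, hyj] <;> abel
  map_add' := by
    intro x y
    simp only [Finsupp.add_apply, smul_add]
    rw [show r • x i + r • y i + (s • x j + s • y j) - (x i + y i)
        = (r • x i + s • x j - x i) + (r • y i + s • y j - y i) by abel]
    rw [show t • x i + t • y i + (v • x j + v • y j) - (x j + y j)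
        = (t • x i + v • x j - x j) + (t • y i + v • y j - y j) by abel]
    rw [Finsupp.single_add, Finsupp.single_add]
    abel

lemma opPair_apply_fst (i j : I) (hij : i ≠ j) (r s t v r' s' t' v' : ℤ)
    (h1 : r' * r + s' * t = 1) (h2 : r' * s + s' * v = 0) (h3 : t' * r + v' * t = 0)
    (h4 : t' * s + v' * v = 1) (h5 : r * r' + s * t' = 1) (h6 : r * s' + s * v' = 0)
    (h7 : t * r' + v * t' = 0) (h8 : t * s' + v * v' = 1) (x : I →₀ G) :
    (opPair i j hij r s t v r' s' t' v' h1 h2 h3 h4 h5 h6 h7 h8 x) i = r • x i + s • x j := by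
  show (x + Finsupp.single i (r • x i + s • x j - x i)
    + Finsupp.single j (t • x i + v • x j - x j)) i = _
  rw [Finsupp.add_apply, Finsupp.add_apply, Finsupp.single_eq_same,
    Finsupp.single_eq_of_ne' (Ne.symm hij)]
  abel

lemma opPair_apply_snd (i j : I) (hij : i ≠ j) (r s t v r' s' t' v' : ℤ)
    (h1 : r' * r + s' * t = 1) (h2 : r' * s + s' * v = 0) (h3 : t' * r + v' * t = 0)
    (h4 : t' * s + v' * v = 1) (h5 : r * r' + s * t' = 1) (h6 : r * s' + s * v' = 0)
    (h7 : t * r' + v * t' = 0) (h8 : t * s' + v * v' = 1) (x : I →₀ G) :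
    (opPair i j hij r s t v r' s' t' v' h1 h2 h3 h4 h5 h6 h7 h8 x) j = t • x i + v • x j := by
  show (x + Finsupp.single i (r • x i + s • x j - x i)
    + Finsupp.single j (t • x i + v • x j - x j)) j = _
  rw [Finsupp.add_apply, Finsupp.add_apply, Finsupp.single_eq_same,
    Finsupp.single_eq_of_ne' hij]
  abel

lemma opPair_apply_other (i j : I) (hij : i ≠ j) {k : I} (hki : k ≠ i) (hkj : k ≠ j)
    (r s t v r' s' t' v' : ℤ)
    (h1 : r' * r + s' * t = 1) (h2 : r' * s + s' * v = 0) (h3 : t' * r + v' * t = 0)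
    (h4 : t' * s + v' * v = 1) (h5 : r * r' + s * t' = 1) (h6 : r * s' + s * v' = 0)
    (h7 : t * r' + v * t' = 0) (h8 : t * s' + v * v' = 1) (x : I →₀ G) :
    (opPair i j hij r s t v r' s' t' v' h1 h2 h3 h4 h5 h6 h7 h8 x) k = x k := by
  show (x + Finsupp.single i (r • x i + s • x j - x i)
    + Finsupp.single j (t • x i + v • x j - x j)) k = _
  rw [Finsupp.add_apply, Finsupp.add_apply, Finsupp.single_eq_of_ne' (Ne.symm hki),
    Finsupp.single_eq_of_ne' (Ne.symm hkj)]
  abel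

end FinsuppOps

section Norm

variable {I : Type*} {G : Type*} [AddCommGroup G]

/-- Divisibility is preserved by additive equivalences. -/
lemma divides_equiv {A B : Type*} [AddCommGroup A] [AddCommGroup B] (e : A ≃+ B) {n : ℕ} {x : A}
    (h : Divides n x) : Divides n (e x) := by
  obtain ⟨z, hz⟩ := h
  exact ⟨e z, by rw [← map_nsmul, hz]⟩

lemma divides_single {i : I} {u : G} {n : ℕ} :
    Divides n (Finsupp.single i u) ↔ Divides n u := by
  constructor
  · rintro ⟨z, hz⟩
    refine ⟨z i, ?_⟩
    have := congrArg (fun f => f i) hz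
    simpa [Finsupp.smul_apply] using this
  · rintro ⟨z, hz⟩
    exact ⟨Finsupp.single i z, by rw [Finsupp.smul_single, hz]⟩

/-- Normal form: any finitely supported element can be concentrated in one coordinate. -/
lemma norm_form [DecidableEq I] (hTF : IsTorsionFreeGrp G) (hhom : Homogeneous G)
    (ht : TransitiveGrp G) (i0 : I) :
    ∀ (N : ℕ) (x : I →₀ G), (x.support.erase i0).card ≤ N →
      ∃ η : (I →₀ G) ≃+ (I →₀ G), ∀ k, k ≠ i0 → (η x) k = 0 := by
  intro N
  induction N with
  | zero =>
    intro x hx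
    refine ⟨AddEquiv.refl _, fun k hk => ?_⟩
    simp only [AddEquiv.refl_apply]
    by_contra h
    have hk' : k ∈ x.support.erase i0 := Finset.mem_erase.mpr ⟨hk, Finsupp.mem_support_iff.mpr h⟩
    rw [Finset.card_eq_zero.mp (Nat.le_zero.mp hx)] at hk'
    exact absurd hk' (Finset.notMem_empty k)
  | succ N ih =>
    intro x hx
    by_cases hemp : x.support.erase i0 = ∅
    · refine ⟨AddEquiv.refl _, fun k hk => ?_⟩
      simp only [AddEquiv.refl_apply]
      by_contra h
      exact absurd (hemp ▸ Finset.mem_erase.mpr ⟨hk, Finsupp.mem_support_iff.mpr h⟩)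
        (Finset.notMem_empty k)
    · obtain ⟨j, hj⟩ := Finset.nonempty_iff_ne_empty.mpr hemp
      have hji : j ≠ i0 := Finset.ne_of_mem_erase hj
      have hxj : x j ≠ 0 := Finsupp.mem_support_iff.mp (Finset.mem_of_mem_erase hj)
      obtain ⟨α, r, s, t, v, r', s', t', v', h1, h2, h3, h4, h5, h6, h7, h8, hzero⟩ :=
        pair hTF hhom ht (x i0) (x j) hxj
      set η₁ := (opSingle j α).trans
        (opPair i0 j (Ne.symm hji) r s t v r' s' t' v' h1 h2 h3 h4 h5 h6 h7 h8) with hη₁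
      set x₂ := η₁ x with hx₂
      have hx₂j : x₂ j = 0 := by
        rw [hx₂, hη₁]
        rw [AddEquiv.trans_apply]
        rw [opPair_apply_snd]
        rw [opSingle_apply_same, opSingle_apply_ne (Ne.symm hji)]
        exact hzero
      have hx₂other : ∀ k, k ≠ i0 → k ≠ j → x₂ k = x k := by
        intro k hki hkj
        rw [hx₂, hη₁, AddEquiv.trans_apply, opPair_apply_other _ _ _ hki hkj,
          opSingle_apply_ne hkj]
      have hcard : (x₂.support.erase i0).card ≤ N := by
        have hsub : x₂.support.erase i0 ⊆ (x.support.erase i0).erase j := by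
          intro k hk
          obtain ⟨hki, hksupp⟩ := Finset.mem_erase.mp hk
          have hkj : k ≠ j := by
            intro he
            exact (Finsupp.mem_support_iff.mp hksupp) (he ▸ hx₂j)
          refine Finset.mem_erase.mpr ⟨hkj, Finset.mem_erase.mpr ⟨hki, ?_⟩⟩
          rw [Finsupp.mem_support_iff, ← hx₂other k hki hkj]
          exact Finsupp.mem_support_iff.mp hksupp
        calc (x₂.support.erase i0).card ≤ ((x.support.erase i0).erase j).card :=
              Finset.card_le_card hsub
          _ = (x.support.erase i0).card - 1 := Finset.card_erase_of_mem hj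
          _ ≤ N := by omega
      obtain ⟨η₂, hη₂⟩ := ih x₂ hcard
      exact ⟨η₁.trans η₂, fun k hk => by rw [AddEquiv.trans_apply, ← hx₂]; exact hη₂ k hk⟩

end Norm

end Krylov


theorem stmt_5 (G : Type*) [AddCommGroup G] (hTF : IsTorsionFreeGrp G)
    (hhom : Homogeneous G) (ht : TransitiveGrp G)
    (I : Type*) [Nonempty I] : TransitiveGrp (I →₀ G) := by
  classical
  intro x y hxy
  set i0 : I := Classical.arbitrary I with hi0
  obtain ⟨η, hη⟩ := Krylov.norm_form hTF hhom ht i0 (x.support.erase i0).card x le_rfl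
  obtain ⟨θ, hθ⟩ := Krylov.norm_form hTF hhom ht i0 (y.support.erase i0).card y le_rfl
  set u := (η x) i0 with hu
  set v := (θ y) i0 with hv
  have hxs : η x = Finsupp.single i0 u := by
    ext k
    by_cases hk : k = i0
    · rw [hk, Finsupp.single_eq_same, hu]
    · rw [Finsupp.single_eq_of_ne' (Ne.symm hk), hη k hk]
  have hys : θ y = Finsupp.single i0 v := by
    ext k
    by_cases hk : k = i0
    · rw [hk, Finsupp.single_eq_same, hv]
    · rw [Finsupp.single_eq_of_ne' (Ne.symm hk), hθ k hk]
  -- transport heights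
  have huv : HeightEq u v := by
    constructor
    · intro p k hp hd
      have h1 : Divides (p ^ k) (η x) := hxs ▸ Krylov.divides_single.mpr hd
      have h2 : Divides (p ^ k) x := by
        have := Krylov.divides_equiv η.symm h1
        rwa [AddEquiv.symm_apply_apply] at this
      have h3 : Divides (p ^ k) (θ y) := Krylov.divides_equiv θ (hxy.1 p k hp h2)
      exact Krylov.divides_single.mp (hys ▸ h3)
    · intro p k hp hd
      have h1 : Divides (p ^ k) (θ y) := hys ▸ Krylov.divides_single.mpr hd
      have h2 : Divides (p ^ k) y := by
        have := Krylov.divides_equiv θ.symm h1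
        rwa [AddEquiv.symm_apply_apply] at this
      have h3 : Divides (p ^ k) (η x) := Krylov.divides_equiv η (hxy.2 p k hp h2)
      exact Krylov.divides_single.mp (hxs ▸ h3)
  obtain ⟨β, hβ⟩ := ht u v huv
  refine ⟨(η.trans (Krylov.opSingle i0 β)).trans θ.symm, ?_⟩
  rw [AddEquiv.trans_apply, AddEquiv.trans_apply]
  have : Krylov.opSingle i0 β (η x) = θ y := by
    rw [hxs, hys]
    have h1 : Krylov.opSingle i0 β (Finsupp.single i0 u)
        = Finsupp.single i0 u + Finsupp.single i0 (β ((Finsupp.single i0 u) i0)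
          - (Finsupp.single i0 u) i0) := rfl
    rw [h1, Finsupp.single_eq_same, hβ]
    rw [← Finsupp.single_add]
    congr 1
    abel
  rw [this, AddEquiv.symm_apply_apply]
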